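/- For every integer n ≥ 3 there exists a bicolored point set S of n points in the plane in general position, containing at least one red and at least one blue point, such that some minimum bichromatic spanning tree of S has an edge that crosses exactly n − 3 other edges of the tree. -/

import Mathlib

set_option maxHeartbeats 1000000
open scoped Classical
noncomputable section
abbrev Pt : Type := EuclideanSpace ℝ (Fin 2)
def GenPos (S : Finset Pt) : Prop :=
  ∀ p ∈ S, ∀ q ∈ S, ∀ r ∈ S, p ≠ q → p ≠ r → q ≠ r →
    ¬ Collinear ℝ ({p, q, r} : Set Pt)

/-- The closed segments `[a,b]` and `[c,d]` cross: they share a point that is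
interior to both segments. -/
def SegCross (a b c d : Pt) : Prop :=
  ∃ p : Pt, p ∈ openSegment ℝ a b ∧ p ∈ openSegment ℝ c d

/-- Two unordered edges (over vertices lying in the plane) cross. -/
def EdgeCross {S : Finset Pt} (e₁ e₂ : Sym2 ↥S) : Prop :=
  ∃ a b c d : ↥S, e₁ = s(a, b) ∧ e₂ = s(c, d) ∧ SegCross ↑a ↑b ↑c ↑d

/-- A (straight-line drawn) graph is plane if no two of its edges cross. -/
def PlaneGraph {S : Finset Pt} (G : SimpleGraph ↥S) : Prop :=
  ∀ e₁ ∈ G.edgeSet, ∀ e₂ ∈ G.edgeSet, e₁ ≠ e₂ → ¬ EdgeCross e₁ e₂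

/-- Every edge has one red (`true`) and one blue (`false`) endpoint. -/
def Bichromatic {S : Finset Pt} (col : Pt → Bool) (G : SimpleGraph ↥S) : Prop :=
  ∀ u v : ↥S, G.Adj u v → col ↑u ≠ col ↑v

/-- The Euclidean length of an unordered edge. -/
def edgeLen {S : Finset Pt} : Sym2 ↥S → ℝ :=
  Sym2.lift ⟨fun a b => dist (a : Pt) (b : Pt), fun _ _ => dist_comm _ _⟩

/-- The total Euclidean length of the edges of a graph drawn with straight-line edges. -/
def graphLen {S : Finset Pt} (G : SimpleGraph ↥S) : ℝ :=
  ∑ᶠ e ∈ G.edgeSet, edgeLen e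

/-- A bichromatic spanning tree of `S`. -/
def IsBST {S : Finset Pt} (col : Pt → Bool) (G : SimpleGraph ↥S) : Prop :=
  G.IsTree ∧ Bichromatic col G

/-- A minimum bichromatic spanning tree of `S`. -/
def IsMinBST {S : Finset Pt} (col : Pt → Bool) (G : SimpleGraph ↥S) : Prop :=
  IsBST col G ∧ ∀ G' : SimpleGraph ↥S, IsBST col G' → graphLen G ≤ graphLen G'

def pt (x y : ℝ) : Pt := WithLp.toLp 2 ![x, y]
@[simp] lemma pt_app0 (x y : ℝ) : pt x y 0 = x := rfl
@[simp] lemma pt_app1 (x y : ℝ) : pt x y 1 = y := rfl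
lemma pt_inj {x y x' y' : ℝ} (h : pt x y = pt x' y') : x = x' ∧ y = y' :=
  ⟨congrArg (fun p : Pt => p 0) h, congrArg (fun p : Pt => p 1) h⟩

lemma dist_pt (x y x' y' : ℝ) : dist (pt x y) (pt x' y') = Real.sqrt ((x-x')^2 + (y-y')^2) := by
  rw [EuclideanSpace.dist_eq]
  congr 1
  rw [Fin.sum_univ_two]
  simp [pt, Real.dist_eq, sq_abs]

def pb (t : ℝ) : Pt := pt t (1 + t^2)
@[simp] lemma pb_app0 (t : ℝ) : pb t 0 = t := rfl
@[simp] lemma pb_app1 (t : ℝ) : pb t 1 = 1 + t^2 := rfl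
lemma pb_inj {t t' : ℝ} (h : pb t = pb t') : t = t' := congrArg (fun p : Pt => p 0) h

def pr1 : Pt := pt 0 0
def pr2 : Pt := pt 1 0
def pbs : Pt := pb (-(2/3))
def pbb (k : ℕ) : Pt := pb (-(k:ℝ))

lemma not_collinear_of_det (p q r : Pt)
    (h : (q 0 - p 0) * (r 1 - p 1) - (q 1 - p 1) * (r 0 - p 0) ≠ 0) :
    ¬ Collinear ℝ ({p, q, r} : Set Pt) := by
  intro hc
  obtain ⟨v, hv⟩ := (collinear_iff_of_mem (Set.mem_insert p _)).1 hc
  obtain ⟨b, hb⟩ := hv q (by simp)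
  obtain ⟨c, hcr⟩ := hv r (by simp)
  apply h
  have hq0 : q 0 - p 0 = b * v 0 := by rw [hb]; simp
  have hq1 : q 1 - p 1 = b * v 1 := by rw [hb]; simp
  have hr0 : r 0 - p 0 = c * v 0 := by rw [hcr]; simp
  have hr1 : r 1 - p 1 = c * v 1 := by rw [hcr]; simp
  rw [hq0, hq1, hr0, hr1]; ring

lemma fam_RRB (a a' t : ℝ) (hne : a ≠ a') :
    ¬ Collinear ℝ ({pt a 0, pt a' 0, pb t} : Set Pt) := by
  apply not_collinear_of_det
  simp only [pt_app0, pt_app1, pb_app0, pb_app1]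
  intro h
  apply hne
  nlinarith [sq_nonneg t]

lemma fam_RBB (a u v : ℝ) (ha : 0 ≤ a) (hu : u < 0) (hv : v < 0) (huv : u ≠ v)
    (h1 : 1 < u*v) : ¬ Collinear ℝ ({pt a 0, pb u, pb v} : Set Pt) := by
  apply not_collinear_of_det
  simp only [pt_app0, pt_app1, pb_app0, pb_app1]
  have key : (u - a) * (1 + v^2 - 0) - (1 + u^2 - 0) * (v - a)
      = (u - v) * (1 - u*v + a*(u+v)) := by ring
  rw [key]
  apply mul_ne_zero (sub_ne_zero.2 huv)
  have : a * (u + v) ≤ 0 := mul_nonpos_of_nonneg_of_nonpos ha (by linarith)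
  intro h; nlinarith

lemma fam_BBB (u v w : ℝ) (h1 : u ≠ v) (h2 : u ≠ w) (h3 : v ≠ w) :
    ¬ Collinear ℝ ({pb u, pb v, pb w} : Set Pt) := by
  apply not_collinear_of_det
  simp only [pb_app0, pb_app1]
  have key : (v - u) * (1 + w^2 - (1 + u^2)) - (1 + v^2 - (1 + u^2)) * (w - u)
      = (v - u) * (w - u) * (w - v) := by ring
  rw [key]
  exact mul_ne_zero (mul_ne_zero (sub_ne_zero.2 (Ne.symm h1)) (sub_ne_zero.2 (Ne.symm h2)))
    (sub_ne_zero.2 (Ne.symm h3))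

def Bt (m : ℕ) (t : ℝ) : Prop := t = -(2/3) ∨ ∃ k : ℕ, 2 ≤ k ∧ k ≤ m+1 ∧ t = -(k:ℝ)

lemma Bt_neg {m t} (h : Bt m t) : t ≤ -(2/3) := by
  rcases h with h | ⟨k, hk2, _, h⟩
  · simp [h]
  · rw [h]; have : (2:ℝ) ≤ (k:ℝ) := by exact_mod_cast hk2
    linarith

lemma Bt_mul {m t t'} (h : Bt m t) (h' : Bt m t') (hne : t ≠ t') : 1 < t * t' := by
  rcases h with h | ⟨k, hk2, _, h⟩ <;> rcases h' with h' | ⟨j, hj2, _, h'⟩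
  · exact absurd (h.trans h'.symm) hne
  · rw [h, h']; have : (2:ℝ) ≤ (j:ℝ) := by exact_mod_cast hj2
    nlinarith
  · rw [h, h']; have : (2:ℝ) ≤ (k:ℝ) := by exact_mod_cast hk2
    nlinarith
  · rw [h, h']
    have : (2:ℝ) ≤ (k:ℝ) := by exact_mod_cast hk2
    have : (2:ℝ) ≤ (j:ℝ) := by exact_mod_cast hj2
    nlinarith

def blues (m : ℕ) : Finset Pt := insert pbs ((Finset.Icc 2 (m+1)).image pbb)
def Spts (m : ℕ) : Finset Pt := insert pr1 (insert pr2 (blues m))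

lemma mem_blues_iff {m p} : p ∈ blues m ↔ ∃ t, Bt m t ∧ p = pb t := by
  simp only [blues, Finset.mem_insert, Finset.mem_image, Finset.mem_Icc]
  constructor
  · rintro (h | ⟨k, ⟨hk2, hk⟩, rfl⟩)
    · exact ⟨-(2/3), Or.inl rfl, h⟩
    · exact ⟨-(k:ℝ), Or.inr ⟨k, hk2, hk, rfl⟩, rfl⟩
  · rintro ⟨t, (rfl | ⟨k, hk2, hk, rfl⟩), rfl⟩
    · exact Or.inl rfl
    · exact Or.inr ⟨k, ⟨hk2, hk⟩, rfl⟩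

lemma mem_Spts_iff {m p} : p ∈ Spts m ↔ p = pr1 ∨ p = pr2 ∨ p ∈ blues m := by
  simp [Spts]

lemma red_of_not_blue {m p} (hp : p ∈ Spts m) :
    (∃ a : ℝ, (a = 0 ∨ a = 1) ∧ p = pt a 0) ∨ (∃ t, Bt m t ∧ p = pb t) := by
  rcases mem_Spts_iff.1 hp with h | h | h
  · exact Or.inl ⟨0, Or.inl rfl, h⟩
  · exact Or.inl ⟨1, Or.inr rfl, h⟩
  · exact Or.inr (mem_blues_iff.1 h)

lemma red_blue_ne {a t : ℝ} : pt a 0 ≠ pb t := by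
  intro h
  have := (pt_inj h).2
  nlinarith [sq_nonneg t]

lemma tp1 {α : Type*} (p q r : α) : ({p,q,r} : Set α) = {q,p,r} := Set.insert_comm p q {r}
lemma tp2 {α : Type*} (p q r : α) : ({p,q,r} : Set α) = {p,r,q} := by rw [Set.pair_comm q r]
lemma tp3 {α : Type*} (p q r : α) : ({p,q,r} : Set α) = {q,r,p} := by rw [tp1, tp2]
lemma tp4 {α : Type*} (p q r : α) : ({p,q,r} : Set α) = {r,p,q} := by rw [tp3, tp3]

lemma genpos_Spts (m : ℕ) : GenPos (Spts m) := by
  intro p hp q hq r hr hpq hpr hqr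
  rcases red_of_not_blue hp with ⟨a, ha, rfl⟩ | ⟨t, ht, rfl⟩ <;>
    rcases red_of_not_blue hq with ⟨a', ha', rfl⟩ | ⟨t', ht', rfl⟩ <;>
      rcases red_of_not_blue hr with ⟨a'', ha'', rfl⟩ | ⟨t'', ht'', rfl⟩
  · -- RRR : impossible
    exfalso
    have h1 : a ≠ a' := fun h => hpq (by rw [h])
    have h2 : a ≠ a'' := fun h => hpr (by rw [h])
    have h3 : a' ≠ a'' := fun h => hqr (by rw [h])
    rcases ha with rfl|rfl <;> rcases ha' with rfl|rfl <;> rcases ha'' with rfl|rfl <;>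
      first | exact h1 rfl | exact h2 rfl | exact h3 rfl
  · -- RRB
    exact fam_RRB a a' t'' (fun h => hpq (by rw [h]))
  · -- RBR
    rw [tp2]
    exact fam_RRB a a'' t' (fun h => hpr (by rw [h]))
  · -- RBB
    have ha0 : (0:ℝ) ≤ a := by rcases ha with rfl|rfl <;> norm_num
    have htne : t' ≠ t'' := fun h => hqr (by rw [h])
    exact fam_RBB a t' t'' ha0 (lt_of_le_of_lt (Bt_neg ht') (by norm_num))
      (lt_of_le_of_lt (Bt_neg ht'') (by norm_num)) htne (Bt_mul ht' ht'' htne)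
  · -- BRR
    rw [tp3]
    exact fam_RRB a' a'' t (fun h => hqr (by rw [h]))
  · -- BRB
    rw [tp1]
    have ha0 : (0:ℝ) ≤ a' := by rcases ha' with rfl|rfl <;> norm_num
    have htne : t ≠ t'' := fun h => hpr (by rw [h])
    exact fam_RBB a' t t'' ha0 (lt_of_le_of_lt (Bt_neg ht) (by norm_num))
      (lt_of_le_of_lt (Bt_neg ht'') (by norm_num)) htne (Bt_mul ht ht'' htne)
  · -- BBR
    rw [tp4]
    have ha0 : (0:ℝ) ≤ a'' := by rcases ha'' with rfl|rfl <;> norm_num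
    have htne : t ≠ t' := fun h => hpq (by rw [h])
    exact fam_RBB a'' t t' ha0 (lt_of_le_of_lt (Bt_neg ht) (by norm_num))
      (lt_of_le_of_lt (Bt_neg ht') (by norm_num)) htne (Bt_mul ht ht' htne)
  · -- BBB
    exact fam_BBB t t' t'' (fun h => hpq (by rw [h])) (fun h => hpr (by rw [h]))
      (fun h => hqr (by rw [h]))

-- distinctness and cards
lemma pbb_inj : Function.Injective pbb := by
  intro k j h
  have := pb_inj h
  exact_mod_cast neg_inj.1 this

lemma pr1_ne_pr2 : pr1 ≠ pr2 := by
  intro h; have := (pt_inj h).1; norm_num at this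

lemma pr1_not_blue {m} : pr1 ∉ blues m := by
  rw [mem_blues_iff]; rintro ⟨t, _, h⟩; exact red_blue_ne h

lemma pr2_not_blue {m} : pr2 ∉ blues m := by
  rw [mem_blues_iff]; rintro ⟨t, _, h⟩; exact red_blue_ne h

lemma pbs_mem_blues {m} : pbs ∈ blues m := by rw [mem_blues_iff]; exact ⟨_, Or.inl rfl, rfl⟩

lemma pbs_ne_pbb {k : ℕ} (hk : 2 ≤ k) : pbs ≠ pbb k := by
  intro h
  have := pb_inj h
  have : (k:ℝ) = 2/3 := by linarith [neg_inj.1 this]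
  have h2 : (2:ℝ) ≤ (k:ℝ) := by exact_mod_cast hk
  linarith

lemma card_blues (m : ℕ) : (blues m).card = m + 1 := by
  rw [blues, Finset.card_insert_of_notMem, Finset.card_image_of_injective _ pbb_inj,
    Nat.card_Icc]
  · simp
  · rw [Finset.mem_image]
    rintro ⟨k, hk, h⟩
    exact pbs_ne_pbb (Finset.mem_Icc.1 hk).1 h.symm

lemma card_Spts (m : ℕ) : (Spts m).card = m + 3 := by
  rw [Spts, Finset.card_insert_of_notMem, Finset.card_insert_of_notMem pr2_not_blue,
    card_blues]
  · simp [Finset.mem_insert]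
    exact ⟨pr1_ne_pr2, pr1_not_blue⟩

-- colors
def colF : Pt → Bool := fun p => decide (p = pr1 ∨ p = pr2)

@[simp] lemma colF_pr1 : colF pr1 = true := by simp [colF]
@[simp] lemma colF_pr2 : colF pr2 = true := by simp [colF]
lemma colF_blue {m p} (h : p ∈ blues m) : colF p = false := by
  rcases mem_blues_iff.1 h with ⟨t, _, rfl⟩
  simp only [colF, decide_eq_false_iff_not]
  rintro (h | h) <;> exact red_blue_ne h.symm

-- vertices
def vr1 (m : ℕ) : ↥(Spts m) := ⟨pr1, by rw [mem_Spts_iff]; tauto⟩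
def vr2 (m : ℕ) : ↥(Spts m) := ⟨pr2, by rw [mem_Spts_iff]; tauto⟩
def vbs (m : ℕ) : ↥(Spts m) := ⟨pbs, by rw [mem_Spts_iff]; exact Or.inr (Or.inr pbs_mem_blues)⟩

@[simp] lemma vr1_coe (m) : ((vr1 m : ↥(Spts m)) : Pt) = pr1 := rfl
@[simp] lemma vr2_coe (m) : ((vr2 m : ↥(Spts m)) : Pt) = pr2 := rfl
@[simp] lemma vbs_coe (m) : ((vbs m : ↥(Spts m)) : Pt) = pbs := rfl

lemma pr2_ne_pbs : pr2 ≠ pbs := red_blue_ne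
lemma pr1_ne_pbs : pr1 ≠ pbs := red_blue_ne

-- the tree
def TG (m : ℕ) : SimpleGraph ↥(Spts m) where
  Adj u v := ((↑u = pr1 ∧ (↑v : Pt) ∈ blues m) ∨ (↑v = pr1 ∧ (↑u : Pt) ∈ blues m)) ∨
             ((↑u = pr2 ∧ (↑v : Pt) = pbs) ∨ (↑v = pr2 ∧ (↑u : Pt) = pbs))
  symm := by constructor; intro u v h; tauto
  loopless := by
    constructor
    rintro u (⟨⟨h1, h2⟩ | ⟨h1, h2⟩⟩ | ⟨⟨h1, h2⟩ | ⟨h1, h2⟩⟩) <;>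
      first
        | (rw [h1] at h2; exact pr1_not_blue h2)
        | (rw [h1] at h2; exact pr2_ne_pbs h2)

def Bv (m : ℕ) : Finset ↥(Spts m) := Finset.univ.filter (fun u => (↑u : Pt) ∈ blues m)

lemma mem_Bv {m} {u : ↥(Spts m)} : u ∈ Bv m ↔ (↑u : Pt) ∈ blues m := by simp [Bv]

lemma vbs_mem_Bv {m} : vbs m ∈ Bv m := mem_Bv.2 pbs_mem_blues

lemma vr1_ne_of_blue {m} {b : ↥(Spts m)} (hb : b ∈ Bv m) : vr1 m ≠ b := by
  intro h; rw [← h, mem_Bv] at hb; exact pr1_not_blue hb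

lemma sym2_r1_inj {m} {b b' : ↥(Spts m)} (h : s(vr1 m, b) = s(vr1 m, b')) : b = b' := by
  rw [Sym2.eq_iff] at h
  rcases h with ⟨-, h⟩ | ⟨h1, h2⟩
  · exact h
  · rw [h2, h1]

lemma edge_ne {m} {b : ↥(Spts m)} (hb : b ∈ Bv m) : s(vr1 m, b) ≠ s(vr2 m, vbs m) := by
  intro h
  rw [Sym2.eq_iff] at h
  rcases h with ⟨h1, -⟩ | ⟨h1, -⟩
  · exact pr1_ne_pr2 (congrArg Subtype.val h1)
  · exact pr1_ne_pbs (congrArg Subtype.val h1)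

def TEdges (m : ℕ) : Finset (Sym2 ↥(Spts m)) :=
  (Bv m).image (fun b => s(vr1 m, b)) ∪ {s(vr2 m, vbs m)}

lemma TG_edgeFinset (m : ℕ) : (TG m).edgeFinset = TEdges m := by
  ext e
  induction e using Sym2.ind with
  | _ u v =>
    rw [SimpleGraph.mem_edgeFinset, SimpleGraph.mem_edgeSet]
    constructor
    · rintro ((⟨h1, h2⟩ | ⟨h1, h2⟩) | (⟨h1, h2⟩ | ⟨h1, h2⟩))
      · exact Finset.mem_union_left _ (Finset.mem_image.2 ⟨v, mem_Bv.2 h2,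
          by rw [show vr1 m = u from Subtype.ext h1.symm]⟩)
      · exact Finset.mem_union_left _ (Finset.mem_image.2 ⟨u, mem_Bv.2 h2,
          by rw [show vr1 m = v from Subtype.ext h1.symm, Sym2.eq_swap]⟩)
      · exact Finset.mem_union_right _ (by
          rw [Finset.mem_singleton, show u = vr2 m from Subtype.ext h1,
            show v = vbs m from Subtype.ext h2])
      · exact Finset.mem_union_right _ (by
          rw [Finset.mem_singleton, show v = vr2 m from Subtype.ext h1,
            show u = vbs m from Subtype.ext h2, Sym2.eq_swap])
    · intro h
      rcases Finset.mem_union.1 h with h | h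
      · obtain ⟨b, hb, hbe⟩ := Finset.mem_image.1 h
        rw [Sym2.eq_iff] at hbe
        rcases hbe with ⟨h1, h2⟩ | ⟨h1, h2⟩
        · subst h1; subst h2; exact Or.inl (Or.inl ⟨rfl, mem_Bv.1 hb⟩)
        · subst h1; subst h2; exact Or.inl (Or.inr ⟨rfl, mem_Bv.1 hb⟩)
      · rw [Finset.mem_singleton, Sym2.eq_iff] at h
        rcases h with ⟨h1, h2⟩ | ⟨h1, h2⟩
        · exact Or.inr (Or.inl ⟨congrArg Subtype.val h1, congrArg Subtype.val h2⟩)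
        · exact Or.inr (Or.inr ⟨congrArg Subtype.val h2, congrArg Subtype.val h1⟩)

lemma card_Bv (m : ℕ) : (Bv m).card = m + 1 := by
  classical
  rw [← card_blues m]
  exact Finset.card_bij (fun u _ => (↑u : Pt)) (fun a ha => mem_Bv.1 ha)
    (fun a _ b _ h => Subtype.ext h)
    (fun b hb => ⟨⟨b, mem_Spts_iff.2 (Or.inr (Or.inr hb))⟩, mem_Bv.2 hb, rfl⟩)

lemma card_TEdges (m : ℕ) : (TEdges m).card = m + 2 := by
  rw [TEdges, Finset.card_union_of_disjoint, Finset.card_image_of_injective _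
    (fun b b' h => sym2_r1_inj h), card_Bv, Finset.card_singleton]
  · rw [Finset.disjoint_singleton_right, Finset.mem_image]
    rintro ⟨b, hb, h⟩
    exact edge_ne hb h

lemma cycle_two_neighbors {V : Type*} {G : SimpleGraph V} {u : V} (c : G.Walk u u)
    (hc : c.IsCycle) : ∃ w₁ w₂, w₁ ≠ w₂ ∧ G.Adj u w₁ ∧ G.Adj u w₂ := by
  cases c with
  | nil => exact absurd hc (by simp [SimpleGraph.Walk.isCycle_def])
  | @cons _ b _ hadj p =>
    rw [SimpleGraph.Walk.cons_isCycle_iff] at hc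
    obtain ⟨y, h', q, hq⟩ := SimpleGraph.Walk.exists_eq_cons_of_ne (hadj.ne) p.reverse
    refine ⟨b, y, ?_, hadj, h'⟩
    intro h
    subst h
    apply hc.2
    have : s(u, b) ∈ p.reverse.edges := by rw [hq]; simp
    simpa using this

lemma TG_adj_r1_blue {m} {b : ↥(Spts m)} (hb : b ∈ Bv m) : (TG m).Adj (vr1 m) b :=
  Or.inl (Or.inl ⟨rfl, mem_Bv.1 hb⟩)

lemma TG_adj_r2_bs (m) : (TG m).Adj (vr2 m) (vbs m) := Or.inr (Or.inl ⟨rfl, rfl⟩)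

lemma vertex_cases {m} (u : ↥(Spts m)) : u = vr1 m ∨ u = vr2 m ∨ u ∈ Bv m := by
  rcases mem_Spts_iff.1 u.2 with h | h | h
  · exact Or.inl (Subtype.ext h)
  · exact Or.inr (Or.inl (Subtype.ext h))
  · exact Or.inr (Or.inr (mem_Bv.2 h))

lemma TG_connected (m) : (TG m).Connected := by
  rw [SimpleGraph.connected_iff]
  refine ⟨?_, ⟨vr1 m⟩⟩
  intro u v
  have key : ∀ w : ↥(Spts m), (TG m).Reachable w (vr1 m) := by
    intro w
    rcases vertex_cases w with rfl | rfl | hw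
    · rfl
    · exact ((TG_adj_r2_bs m).reachable).trans
        ((TG_adj_r1_blue (vbs_mem_Bv)).symm.reachable)
    · exact (TG_adj_r1_blue hw).symm.reachable
  exact (key u).trans (key v).symm

lemma TG_neighbors {m} {u w : ↥(Spts m)} (h : (TG m).Adj u w) :
    (u = vr1 m) ∨ (u = vr2 m ∧ w = vbs m) ∨ (u ∈ Bv m ∧ w = vr1 m) ∨ (u = vbs m ∧ w = vr2 m) := by
  rcases h with (⟨h1, h2⟩ | ⟨h1, h2⟩) | (⟨h1, h2⟩ | ⟨h1, h2⟩)
  · exact Or.inl (Subtype.ext h1)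
  · exact Or.inr (Or.inr (Or.inl ⟨mem_Bv.2 h2, Subtype.ext h1⟩))
  · exact Or.inr (Or.inl ⟨Subtype.ext h1, Subtype.ext h2⟩)
  · exact Or.inr (Or.inr (Or.inr ⟨Subtype.ext h2, Subtype.ext h1⟩))

lemma TG_acyclic (m) : (TG m).IsAcyclic := by
  intro v c hc
  -- every support vertex is vr1 or vbs
  have hsup : ∀ u ∈ c.support, u = vr1 m ∨ u = vbs m := by
    intro u hu
    obtain ⟨w₁, w₂, hne, h1, h2⟩ := cycle_two_neighbors (c.rotate u hu) (hc.rotate hu)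
    rcases TG_neighbors h1 with rfl | ⟨rfl, rfl⟩ | ⟨hu1, rfl⟩ | ⟨rfl, rfl⟩
    · exact Or.inl rfl
    · -- u = vr2 : w₂ must also be vbs
      rcases TG_neighbors h2 with h | ⟨-, rfl⟩ | ⟨hu1, -⟩ | ⟨hbs, -⟩
      · exact absurd (congrArg Subtype.val h) (fun hh => pr1_ne_pr2 hh.symm)
      · exact absurd rfl hne
      · exact absurd (mem_Bv.1 hu1) pr2_not_blue
      · exact absurd (congrArg Subtype.val hbs) pr2_ne_pbs
    · -- u blue; if u = vbs fine ; otherwise w₂ = vr1 = w₁ contra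
      rcases TG_neighbors h2 with h | ⟨h, -⟩ | ⟨-, rfl⟩ | ⟨h, -⟩
      · exact Or.inl h
      · exact Or.inl (by rw [h] at hu1; exact absurd (mem_Bv.1 hu1) (by
          exact fun hh => pr2_not_blue hh))
      · exact absurd rfl hne
      · exact Or.inr h
    · exact Or.inr rfl
  have h3 : 3 ≤ c.length := hc.three_le_length
  have htail : c.support.tail.Nodup := hc.support_nodup
  have hlen : c.support.tail.length = c.length := by
    rw [List.length_tail, SimpleGraph.Walk.length_support]; omega
  have hcard : c.support.tail.toFinset.card = c.support.tail.length :=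
    List.toFinset_card_of_nodup htail
  have hsubset : c.support.tail.toFinset ⊆ {vr1 m, vbs m} := by
    intro x hx
    have := hsup x (List.mem_of_mem_tail (List.mem_toFinset.1 hx))
    rw [Finset.mem_insert, Finset.mem_singleton]
    exact this
  have h2 := Finset.card_le_card hsubset
  have h22 : ({vr1 m, vbs m} : Finset ↥(Spts m)).card ≤ 2 :=
    le_trans (Finset.card_insert_le _ _) (by simp)
  omega


lemma TG_isTree (m) : (TG m).IsTree := ⟨TG_connected m, TG_acyclic m⟩

lemma TG_bichromatic (m) : Bichromatic colF (TG m) := by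
  rintro u v ((⟨h1, h2⟩ | ⟨h1, h2⟩) | (⟨h1, h2⟩ | ⟨h1, h2⟩))
  · rw [h1, colF_blue h2]; simp
  · rw [h1, colF_blue h2]; simp
  · rw [h1, h2, colF_blue (pbs_mem_blues (m := m))]; simp
  · rw [h1, h2, colF_blue (pbs_mem_blues (m := m))]; simp

@[simp] lemma edgeLen_mk {m} (u v : ↥(Spts m)) : edgeLen s(u, v) = dist (↑u : Pt) ↑v := rfl

lemma graphLen_eq_sum {m} (G : SimpleGraph ↥(Spts m)) :
    graphLen G = ∑ e ∈ G.edgeFinset, edgeLen e := by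
  rw [graphLen, ← finsum_mem_coe_finset, SimpleGraph.coe_edgeFinset]

lemma graphLen_TG (m) :
    graphLen (TG m) = (∑ b ∈ Bv m, dist pr1 (↑b : Pt)) + dist pr2 pbs := by
  rw [graphLen_eq_sum, TG_edgeFinset, TEdges, Finset.sum_union, Finset.sum_image,
    Finset.sum_singleton]
  · simp
  · exact fun b _ b' _ h => sym2_r1_inj h
  · rw [Finset.disjoint_singleton_right, Finset.mem_image]
    rintro ⟨b, hb, h⟩
    exact edge_ne hb h

lemma dist_le_blue {m p} (h : p ∈ blues m) : dist pr1 p ≤ dist pr2 p := by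
  obtain ⟨t, ht, rfl⟩ := mem_blues_iff.1 h
  have ht' := Bt_neg ht
  rw [pr1, pr2, pb, dist_pt, dist_pt]
  apply Real.sqrt_le_sqrt
  nlinarith

lemma Bt_cases {m t} (h : Bt m t) : t = -(2/3) ∨ t ≤ -2 := by
  rcases h with h | ⟨k, hk2, _, rfl⟩
  · exact Or.inl h
  · right
    have : (2:ℝ) ≤ (k:ℝ) := by exact_mod_cast hk2
    linarith

lemma dist_pbs_le {m p} (h : p ∈ blues m) : dist pr2 pbs ≤ dist pr2 p := by
  obtain ⟨t, ht, rfl⟩ := mem_blues_iff.1 h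
  rcases Bt_cases ht with rfl | ht2
  · exact le_refl _
  · rw [pr2, pbs, pb, pb, dist_pt, dist_pt]
    apply Real.sqrt_le_sqrt
    nlinarith

lemma colF_true {p} (h : colF p = true) : p = pr1 ∨ p = pr2 := by
  simpa [colF] using h

lemma TG_min (m) (G' : SimpleGraph ↥(Spts m)) (hT : G'.IsTree) (hB : Bichromatic colF G') :
    graphLen (TG m) ≤ graphLen G' := by
  classical
  set B1 := (Bv m).filter (fun b => G'.Adj (vr1 m) b) with hB1def
  set B2 := (Bv m).filter (fun b => G'.Adj (vr2 m) b) with hB2def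
  have hB1sub : B1 ⊆ Bv m := Finset.filter_subset _ _
  have hB2sub : B2 ⊆ Bv m := Finset.filter_subset _ _
  -- edge classification
  have hE : G'.edgeFinset = B1.image (fun b => s(vr1 m, b)) ∪ B2.image (fun b => s(vr2 m, b)) := by
    apply Finset.Subset.antisymm
    · intro e he
      induction e using Sym2.ind with
      | _ u v =>
        rw [SimpleGraph.mem_edgeFinset, SimpleGraph.mem_edgeSet] at he
        have hcol := hB u v he
        rcases vertex_cases u with rfl | rfl | hu <;> rcases vertex_cases v with rfl | rfl | hv
        · exact absurd rfl hcol
        · simp at hcol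
        · exact Finset.mem_union_left _ (Finset.mem_image.2
            ⟨v, Finset.mem_filter.2 ⟨hv, he⟩, rfl⟩)
        · simp at hcol
        · exact absurd rfl hcol
        · exact Finset.mem_union_right _ (Finset.mem_image.2
            ⟨v, Finset.mem_filter.2 ⟨hv, he⟩, rfl⟩)
        · exact Finset.mem_union_left _ (Finset.mem_image.2
            ⟨u, Finset.mem_filter.2 ⟨hu, he.symm⟩, Sym2.eq_swap⟩)
        · exact Finset.mem_union_right _ (Finset.mem_image.2
            ⟨u, Finset.mem_filter.2 ⟨hu, he.symm⟩, Sym2.eq_swap⟩)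
        · exact absurd (by rw [colF_blue (mem_Bv.1 hu), colF_blue (mem_Bv.1 hv)]) hcol
    · apply Finset.union_subset
      · intro e he
        obtain ⟨b, hb, rfl⟩ := Finset.mem_image.1 he
        rw [SimpleGraph.mem_edgeFinset, SimpleGraph.mem_edgeSet]
        exact (Finset.mem_filter.1 hb).2
      · intro e he
        obtain ⟨b, hb, rfl⟩ := Finset.mem_image.1 he
        rw [SimpleGraph.mem_edgeFinset, SimpleGraph.mem_edgeSet]
        exact (Finset.mem_filter.1 hb).2
  have hdisj : Disjoint (B1.image (fun b => s(vr1 m, b))) (B2.image (fun b => s(vr2 m, b))) := by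
    rw [Finset.disjoint_left]
    rintro e h1 h2
    obtain ⟨b, hb, rfl⟩ := Finset.mem_image.1 h1
    obtain ⟨b', hb', he⟩ := Finset.mem_image.1 h2
    rw [Sym2.eq_iff] at he
    rcases he with ⟨h1', -⟩ | ⟨h1', h2'⟩
    · exact pr1_ne_pr2 (congrArg Subtype.val h1').symm
    · have : (↑b' : Pt) ∈ blues m := mem_Bv.1 (hB2sub hb')
      rw [h2'] at this
      exact pr1_not_blue this
  -- cardinalities
  have hcardS : Fintype.card ↥(Spts m) = m + 3 := by
    rw [Fintype.card_coe, card_Spts]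
  have hcardE : G'.edgeFinset.card = m + 2 := by
    have := hT.card_edgeFinset
    omega
  have hinj1 : ∀ b ∈ B1, ∀ b' ∈ B1, s(vr1 m, b) = s(vr1 m, b') → b = b' :=
    fun b _ b' _ h => sym2_r1_inj h
  have hinj2 : ∀ b ∈ B2, ∀ b' ∈ B2, s(vr2 m, b) = s(vr2 m, b') → b = b' := by
    intro b _ b' _ h
    rw [Sym2.eq_iff] at h
    rcases h with ⟨-, h⟩ | ⟨h1, h2⟩
    · exact h
    · rw [h2, h1]
  have hcard12 : B1.card + B2.card = m + 2 := by
    rw [← Finset.card_image_of_injOn (fun b hb => fun b' hb' => hinj1 b hb b' hb'),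
      ← Finset.card_image_of_injOn (fun b hb => fun b' hb' => hinj2 b hb b' hb'),
      ← Finset.card_union_of_disjoint hdisj, ← hE, hcardE]
  -- every blue is covered
  have hcover : Bv m ⊆ B1 ∪ B2 := by
    intro b hb
    have hbne : b ≠ vr1 m := (vr1_ne_of_blue hb).symm
    obtain ⟨p⟩ := hT.isConnected.preconnected b (vr1 m)
    obtain ⟨w, hadj, -, -⟩ := SimpleGraph.Walk.exists_eq_cons_of_ne hbne p
    have hcol := hB b w hadj
    rw [colF_blue (mem_Bv.1 hb)] at hcol
    have hw : colF ↑w = true := by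
      cases hcw : colF (↑w : Pt)
      · exact absurd hcw.symm hcol
      · rfl
    rcases colF_true hw with h | h
    · exact Finset.mem_union_left _ (Finset.mem_filter.2
        ⟨hb, by rw [show w = vr1 m from Subtype.ext h] at hadj; exact hadj.symm⟩)
    · exact Finset.mem_union_right _ (Finset.mem_filter.2
        ⟨hb, by rw [show w = vr2 m from Subtype.ext h] at hadj; exact hadj.symm⟩)
  have hBveq : B1 ∪ B2 = Bv m := Finset.Subset.antisymm (Finset.union_subset hB1sub hB2sub) hcover
  -- intersection nonempty
  have hmeet : ∃ x, x ∈ B1 ∧ x ∈ B2 := by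
    rw [← Finset.not_disjoint_iff]
    intro hd
    have := Finset.card_union_of_disjoint hd
    rw [hBveq, card_Bv, hcard12] at this
    omega
  obtain ⟨x, hx1, hx2⟩ := hmeet
  -- length computation
  have hlen : graphLen G' = (∑ b ∈ B1, dist pr1 (↑b : Pt)) + ∑ b ∈ B2, dist pr2 (↑b : Pt) := by
    rw [graphLen_eq_sum, hE, Finset.sum_union hdisj, Finset.sum_image hinj1,
      Finset.sum_image hinj2]
    simp
  rw [hlen, graphLen_TG]
  have hsplit : (∑ b ∈ B2, dist pr2 (↑b : Pt)) =
      (∑ b ∈ B2 ∩ B1, dist pr2 (↑b : Pt)) + ∑ b ∈ B2 \ B1, dist pr2 (↑b : Pt) :=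
    (Finset.sum_inter_add_sum_sdiff _ _ _).symm
  have h1 : (∑ b ∈ B2 \ B1, dist pr1 (↑b : Pt)) ≤ ∑ b ∈ B2 \ B1, dist pr2 (↑b : Pt) := by
    apply Finset.sum_le_sum
    intro b hb
    exact dist_le_blue (mem_Bv.1 (hB2sub (Finset.mem_sdiff.1 hb).1))
  have h2 : dist pr2 pbs ≤ ∑ b ∈ B2 ∩ B1, dist pr2 (↑b : Pt) := by
    calc dist pr2 pbs ≤ dist pr2 (↑x : Pt) := dist_pbs_le (mem_Bv.1 (hB2sub hx2))
    _ ≤ _ := Finset.single_le_sum (f := fun b : ↥(Spts m) => dist pr2 (↑b : Pt))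
      (fun b _ => dist_nonneg) (Finset.mem_inter.2 ⟨hx2, hx1⟩)
  have h3 : (∑ b ∈ Bv m, dist pr1 (↑b : Pt)) =
      (∑ b ∈ B1, dist pr1 (↑b : Pt)) + ∑ b ∈ B2 \ B1, dist pr1 (↑b : Pt) := by
    rw [← Finset.sum_union Finset.disjoint_sdiff, Finset.union_sdiff_self_eq_union, hBveq]
  linarith

lemma smul_add_pt (a b x y x' y' : ℝ) :
    a • pt x y + b • pt x' y' = pt (a*x + b*x') (a*y + b*y') := by
  ext i
  fin_cases i <;> simp [pt]

lemma mem_openSegment_pt {p q z : Pt} (s : ℝ) (hs : 0 < s) (hs1 : s < 1)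
    (hz : (1-s) • p + s • q = z) : z ∈ openSegment ℝ p q :=
  ⟨1-s, s, by linarith, hs, by ring, hz⟩

lemma cross_k {k : ℕ} (hk : 2 ≤ k) : SegCross pr2 pbs pr1 (pbb k) := by
  have hK : (2:ℝ) ≤ (k:ℝ) := by exact_mod_cast hk
  set K := (k:ℝ) with hKdef
  have hD : (0:ℝ) < 15*K^2 - 13*K + 15 := by nlinarith
  set D := 15*K^2 - 13*K + 15 with hDdef
  refine ⟨pt (-13*K/D) (13*(1+K^2)/D), ?_, ?_⟩
  · refine mem_openSegment_pt (9*(1+K^2)/D) (by positivity) ?_ ?_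
    · rw [div_lt_one hD]; nlinarith
    · rw [pr2, pbs, pb, smul_add_pt]
      refine congrArg₂ pt ?_ ?_ <;> field_simp <;> ring
  · refine mem_openSegment_pt (13/D) (by positivity) ?_ ?_
    · rw [div_lt_one hD]; nlinarith
    · rw [pr1, pbb, pb, smul_add_pt]
      refine congrArg₂ pt ?_ ?_ <;> field_simp <;> ring

lemma no_cross_master : ¬ ∃ p : Pt, p ∈ openSegment ℝ pr2 pbs ∧ p ∈ openSegment ℝ pr1 pbs := by
  rintro ⟨p, ⟨a, b, ha, hb, hab, hp⟩, ⟨a', b', ha', hb', hab', hp'⟩⟩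
  rw [pr2, pbs, pb, smul_add_pt] at hp
  rw [pr1, pbs, pb, smul_add_pt] at hp'
  have := pt_inj (hp.trans hp'.symm)
  obtain ⟨h0, h1⟩ := this
  have hbb' : b = b' := by nlinarith
  nlinarith

lemma segCross_swap₁ {a b c d : Pt} (h : SegCross a b c d) : SegCross b a c d := by
  obtain ⟨p, h1, h2⟩ := h
  exact ⟨p, by rwa [openSegment_symm], h2⟩

lemma segCross_swap₂ {a b c d : Pt} (h : SegCross a b c d) : SegCross a b d c := by
  obtain ⟨p, h1, h2⟩ := h
  exact ⟨p, h1, by rwa [openSegment_symm]⟩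

lemma no_edgeCross_shared (m) : ¬ EdgeCross s(vr2 m, vbs m) s(vr1 m, vbs m) := by
  rintro ⟨a, b, c, d, h1, h2, hS⟩
  rw [Sym2.eq_iff] at h1 h2
  apply no_cross_master
  have hS' : SegCross pr2 pbs (↑c : Pt) ↑d := by
    rcases h1 with ⟨rfl, rfl⟩ | ⟨rfl, rfl⟩
    · exact hS
    · exact segCross_swap₁ hS
  have hS'' : SegCross pr2 pbs pr1 pbs := by
    rcases h2 with ⟨rfl, rfl⟩ | ⟨rfl, rfl⟩
    · exact hS'
    · exact segCross_swap₂ hS'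
  exact hS''

lemma blue_not_pbs {m} {b : ↥(Spts m)} (hb : b ∈ Bv m) (hne : b ≠ vbs m) :
    ∃ k : ℕ, 2 ≤ k ∧ k ≤ m + 1 ∧ (↑b : Pt) = pbb k := by
  obtain ⟨t, ht, hbt⟩ := mem_blues_iff.1 (mem_Bv.1 hb)
  rcases ht with rfl | ⟨k, hk2, hkm, rfl⟩
  · exact absurd (Subtype.ext hbt) hne
  · exact ⟨k, hk2, hkm, hbt⟩

lemma edgeCross_spoke {m} {b : ↥(Spts m)} (hb : b ∈ Bv m) (hne : b ≠ vbs m) :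
    EdgeCross s(vr2 m, vbs m) s(vr1 m, b) := by
  obtain ⟨k, hk2, _, hbk⟩ := blue_not_pbs hb hne
  exact ⟨vr2 m, vbs m, vr1 m, b, rfl, rfl, by
    rw [vr2_coe, vbs_coe, vr1_coe, hbk]; exact cross_k hk2⟩

lemma Xset_eq (m) :
    {e' : Sym2 ↥(Spts m) | e' ∈ (TG m).edgeSet ∧ e' ≠ s(vr2 m, vbs m) ∧
        EdgeCross s(vr2 m, vbs m) e'} =
      ↑(((Bv m).erase (vbs m)).image (fun b => s(vr1 m, b))) := by
  ext e'
  simp only [Set.mem_setOf_eq, Finset.coe_image, Set.mem_image, Finset.mem_coe]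
  constructor
  · rintro ⟨hmem, hne, hcross⟩
    have : e' ∈ TEdges m := by
      rw [← TG_edgeFinset, SimpleGraph.mem_edgeFinset]; exact hmem
    rcases Finset.mem_union.1 this with h | h
    · obtain ⟨b, hb, rfl⟩ := Finset.mem_image.1 h
      refine ⟨b, Finset.mem_erase.2 ⟨?_, hb⟩, rfl⟩
      rintro rfl
      exact no_edgeCross_shared m hcross
    · exact absurd (Finset.mem_singleton.1 h) hne
  · rintro ⟨b, hb, rfl⟩
    obtain ⟨hbne, hbBv⟩ := Finset.mem_erase.1 hb
    refine ⟨?_, ?_, edgeCross_spoke hbBv hbne⟩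
    · rw [SimpleGraph.mem_edgeSet]; exact TG_adj_r1_blue hbBv
    · exact edge_ne hbBv

lemma Xset_card (m) :
    Nat.card {e' : Sym2 ↥(Spts m) | e' ∈ (TG m).edgeSet ∧ e' ≠ s(vr2 m, vbs m) ∧
        EdgeCross s(vr2 m, vbs m) e'} = m := by
  rw [Xset_eq, Nat.card_coe_set_eq, Set.ncard_coe_finset,
    Finset.card_image_of_injective _ (fun b b' h => sym2_r1_inj h),
    Finset.card_erase_of_mem vbs_mem_Bv, card_Bv]
  omega

/-- For every `n ≥ 3` there is a bicolored set of `n` points in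
general position, with at least one red and one blue point, such that some minimum
bichromatic spanning tree of it has an edge crossing exactly `n − 3` other edges. -/
theorem exists_minBST_edge_with_max_crossings (n : ℕ) (hn : 3 ≤ n) :
    ∃ (S : Finset Pt) (col : Pt → Bool) (T : SimpleGraph ↥S) (e : Sym2 ↥S),
      S.card = n ∧ GenPos S ∧
      (∃ r ∈ S, col r = true) ∧ (∃ b ∈ S, col b = false) ∧
      IsMinBST col T ∧ e ∈ T.edgeSet ∧
      Nat.card {e' : Sym2 ↥S | e' ∈ T.edgeSet ∧ e' ≠ e ∧ EdgeCross e e'} = n - 3 := by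
  refine ⟨Spts (n-3), colF, TG (n-3), s(vr2 (n-3), vbs (n-3)), ?_, genpos_Spts _, ?_, ?_, ?_, ?_, ?_⟩
  · rw [card_Spts]; omega
  · exact ⟨pr1, (vr1 (n-3)).2, colF_pr1⟩
  · exact ⟨pbs, (vbs (n-3)).2, colF_blue (pbs_mem_blues (m := n-3))⟩
  · exact ⟨⟨TG_isTree _, TG_bichromatic _⟩, fun G' hG' => TG_min _ G' hG'.1 hG'.2⟩
  · rw [SimpleGraph.mem_edgeSet]; exact TG_adj_r2_bs _
  · rw [Xset_card]
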